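/- Let d ≥ 2, let 1 ≤ γ_1 ≤ … ≤ γ_{d-1} ≤ β be positive integers, and let p, n be positive integers with gcd(p,n) = 1 and n even. Then ∏_{k=1}^{βn-1} ( d − e^{2πi p k/(βn)} − ∑_{m=1}^{d-1} e^{2πi (γ_m n + p) k/(βn)} ) = n d^{βn−1} · ( 1 − δ_{β even} · (−1)^p d^{−n} (1 + ∑_{m=1}^{d-1} (−1)^{γ_m})^n ) · ∏_{k=1}^{⌈β/2⌉−1} ( 1 − 2 |1 − μ_k/d|^n cos( 2πpk/β + n·arctan( (∑_{m=1}^{d-1} sin(2πγ_m k/β)) / (d − η_k/2) ) ) + |1 − μ_k/d|^{2n} ), where when d − η_k/2 = 0 the arctan term is interpreted as its limit sgn(∑_{m=1}^{d-1} sin(2πγ_m k/β))·π/2. (By the matrix tree theorem this product equals the number of spanning trees in the directed circulant graph on βn vertices with generators p, γ_1 n + p, …, γ_{d-1} n + p.) -/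

import Mathlib

open Finset Real

/-- `μ_k = d − 1 − ∑_{m=1}^{d-1} e^{2πiγ_m k/β}`, the nonzero Laplacian eigenvalues of the
directed circulant graph on `β` vertices with generators `γ_1, …, γ_{d-1}`. -/
noncomputable def dirEig (d β : ℕ) (γ : ℕ → ℕ) (k : ℕ) : ℂ :=
  (d : ℂ) - 1 - ∑ m ∈ Finset.Icc 1 (d - 1), Complex.exp (2 * Real.pi * Complex.I * (γ m) * k / β)

/-- `η_k = 2(d−1) − 2∑_{m=1}^{d-1} cos(2πγ_m k/β)`, the nonzero Laplacian eigenvalues of the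
undirected circulant graph on `β` vertices with generators `γ_1, …, γ_{d-1}`. -/
noncomputable def undirEig (d β : ℕ) (γ : ℕ → ℕ) (k : ℕ) : ℝ :=
  2 * ((d : ℝ) - 1) - 2 * ∑ m ∈ Finset.Icc 1 (d - 1), Real.cos (2 * Real.pi * (γ m) * k / β)

/-- The phase `arctan((∑_{m=1}^{d-1} sin(2πγ_m k/β))/(d − η_k/2))`, interpreted, when
`d − η_k/2 = 0`, as its limit `sgn(∑_{m=1}^{d-1} sin(2πγ_m k/β))·π/2`. -/
noncomputable def eigPhase (d β : ℕ) (γ : ℕ → ℕ) (k : ℕ) : ℝ :=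
  if (d : ℝ) - undirEig d β γ k / 2 = 0 then
    Real.sign (∑ m ∈ Finset.Icc 1 (d - 1), Real.sin (2 * Real.pi * (γ m) * k / β)) * Real.pi / 2
  else
    Real.arctan ((∑ m ∈ Finset.Icc 1 (d - 1), Real.sin (2 * Real.pi * (γ m) * k / β))
      / ((d : ℝ) - undirEig d β γ k / 2))

lemma prodRoots {n : ℕ} (hn : 0 < n) {ζ : ℂ} (hζ : IsPrimitiveRoot ζ n) (X c : ℂ) :
    ∏ t ∈ range n, (X - ζ ^ t * c) = X ^ n - c ^ n := by
  have h := X_pow_sub_C_eq_prod hζ hn (rfl : c ^ n = c ^ n)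
  have h2 := congrArg (Polynomial.eval X) h
  simpa [Polynomial.eval_prod] using h2.symm

lemma prodOneSub {n : ℕ} (hn : 1 ≤ n) {ζ : ℂ} (hζ : IsPrimitiveRoot ζ n) :
    ∏ t ∈ Icc 1 (n - 1), (1 - ζ ^ t) = (n : ℂ) := by
  obtain ⟨m, rfl⟩ : ∃ m, n = m + 1 := ⟨n - 1, by omega⟩
  have h := hζ.prod_one_sub_pow_eq_order
  rw [show m + 1 - 1 = m by omega, ← Finset.Ico_add_one_right_eq_Icc, prod_Ico_eq_prod_range]
  simp only [Nat.succ_sub_one, Nat.add_sub_cancel, add_comm 1]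
  rw [h]; push_cast; ring

lemma repPhase (x y : ℝ) :
    ∃ s : ℂ, (s = 1 ∨ s = -1) ∧
      (x : ℂ) + y * Complex.I =
        s * (Real.sqrt (x ^ 2 + y ^ 2) : ℝ) *
          Complex.exp (((if x = 0 then Real.sign y * Real.pi / 2 else Real.arctan (y / x)) : ℝ)
            * Complex.I) := by
  by_cases hx : x = 0
  · subst hx
    rcases lt_trichotomy y 0 with hy | hy | hy
    · refine ⟨1, Or.inl rfl, ?_⟩
      rw [if_pos rfl, Real.sign_of_neg hy, Complex.exp_mul_I]
      rw [show (-1 : ℝ) * Real.pi / 2 = -(Real.pi / 2) by ring]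
      push_cast
      rw [Complex.cos_neg, Complex.sin_neg, Complex.cos_pi_div_two, Complex.sin_pi_div_two]
      have h0 : Real.sqrt (0 ^ 2 + y ^ 2) = -y := by
        rw [show (0:ℝ) ^ 2 + y ^ 2 = (-y) ^ 2 by ring, Real.sqrt_sq (by linarith)]
      rw [h0]
      push_cast
      ring
    · subst hy
      refine ⟨1, Or.inl rfl, ?_⟩
      simp
    · refine ⟨1, Or.inl rfl, ?_⟩
      rw [if_pos rfl, Real.sign_of_pos hy, Complex.exp_mul_I]
      rw [show (1 : ℝ) * Real.pi / 2 = Real.pi / 2 by ring]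
      push_cast
      rw [Complex.cos_pi_div_two, Complex.sin_pi_div_two]
      have h0 : Real.sqrt (0 ^ 2 + y ^ 2) = y := by
        rw [show (0:ℝ) ^ 2 + y ^ 2 = y ^ 2 by ring, Real.sqrt_sq (by linarith)]
      rw [h0]
      push_cast
      ring
  · set t := y / x with ht
    set S := Real.sqrt (1 + t ^ 2) with hSdef
    have ht2 : (0 : ℝ) < 1 + t ^ 2 := by positivity
    have hS : S ≠ 0 := by positivity
    have hsq : Real.sqrt (x ^ 2 + y ^ 2) = |x| * S := by
      rw [hSdef, show x ^ 2 + y ^ 2 = x ^ 2 * (1 + t ^ 2) by rw [ht]; field_simp <;> ring,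
        Real.sqrt_mul (sq_nonneg x), Real.sqrt_sq_eq_abs]
    have hsx : Real.sign x * |x| = x := by
      rcases lt_trichotomy x 0 with h | h | h
      · rw [Real.sign_of_neg h, abs_of_neg h]; ring
      · exact absurd h hx
      · rw [Real.sign_of_pos h, abs_of_pos h]; ring
    have hsx2 : Real.sign x * |x| * t = y := by
      rw [hsx, ht]; field_simp
    refine ⟨((Real.sign x : ℝ) : ℂ), ?_, ?_⟩
    · rcases lt_trichotomy x 0 with h | h | h
      · right; rw [Real.sign_of_neg h]; norm_num
      · exact absurd h hx
      · left; rw [Real.sign_of_pos h]; norm_num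
    · rw [if_neg hx, Complex.exp_mul_I, ← Complex.ofReal_cos, ← Complex.ofReal_sin,
        Real.cos_arctan, Real.sin_arctan, hsq, ← hSdef]
      have h1 : Real.sign x * (|x| * S) * (1 / S) = x := by
        field_simp
        linear_combination hsx
      have h2 : Real.sign x * (|x| * S) * (t / S) = y := by
        field_simp
        linear_combination hsx2 - Real.sign x * |x| * ht
      symm
      calc (((Real.sign x : ℝ) : ℂ)) * ((|x| * S : ℝ) : ℂ)
            * (((1 / S : ℝ) : ℂ) + ((t / S : ℝ) : ℂ) * Complex.I)
          = ((Real.sign x * (|x| * S) * (1 / S) : ℝ) : ℂ)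
            + ((Real.sign x * (|x| * S) * (t / S) : ℝ) : ℂ) * Complex.I := by
            push_cast; ring
        _ = (x : ℂ) + (y : ℂ) * Complex.I := by rw [h1, h2]


lemma phasePow (x y : ℝ) {n : ℕ} (hn : Even n) :
    ((x : ℂ) + y * Complex.I) ^ n
      = ((Real.sqrt (x ^ 2 + y ^ 2) : ℝ) : ℂ) ^ n *
        Complex.exp ((n : ℂ) *
          (((if x = 0 then Real.sign y * Real.pi / 2 else Real.arctan (y / x)) : ℝ) : ℂ)
          * Complex.I) := by
  obtain ⟨s, hs, hrep⟩ := repPhase x y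
  rw [hrep, mul_pow, mul_pow, ← Complex.exp_nat_mul]
  have hs1 : s ^ n = 1 := by
    rcases hs with rfl | rfl
    · exact one_pow n
    · exact hn.neg_one_pow
  rw [hs1, one_mul]
  ring_nf

lemma expNatTwoPi (m : ℕ) : Complex.exp (2 * Real.pi * Complex.I * m) = 1 := by
  have h := Complex.exp_int_mul_two_pi_mul_I (m : ℤ)
  rw [show ((m : ℤ) : ℂ) * (2 * Real.pi * Complex.I) = 2 * Real.pi * Complex.I * (m : ℂ) by
    push_cast; ring] at h
  exact h

lemma natProdBound {a b β n : ℕ} (hβ : 1 ≤ β) (hn : 1 ≤ n) (ha : a ≤ β - 1) (hb : b ≤ n - 1) :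
    a + β * b ≤ β * n - 1 := by
  obtain ⟨β', rfl⟩ : ∃ x, β = x + 1 := ⟨β - 1, by omega⟩
  obtain ⟨n', rfl⟩ : ∃ x, n = x + 1 := ⟨n - 1, by omega⟩
  simp only [Nat.add_sub_cancel] at ha hb
  have h1 : (β' + 1) * b ≤ (β' + 1) * n' := Nat.mul_le_mul_left _ hb
  have h2 : (β' + 1) * (n' + 1) = (β' + 1) * n' + (β' + 1) := by ring
  omega


/-- The number of spanning trees of the directed circulant graph on `βn` vertices with
generators `p, γ_1 n + p, …, γ_{d-1} n + p`, for `gcd(p,n) = 1` and even `n`, as a product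
of `⌈β/2⌉ − 1` explicit factors. -/
theorem stmt_0 (d β p n : ℕ) (γ : ℕ → ℕ) (hd : 2 ≤ d)
    (hγ1 : ∀ m ∈ Finset.Icc 1 (d - 1), 1 ≤ γ m)
    (hγmono : ∀ m ∈ Finset.Icc 1 (d - 1), ∀ m' ∈ Finset.Icc 1 (d - 1), m ≤ m' → γ m ≤ γ m')
    (hγβ : ∀ m ∈ Finset.Icc 1 (d - 1), γ m ≤ β)
    (hβ : 1 ≤ β) (hp : 1 ≤ p) (hn : 1 ≤ n) (hpn : Nat.gcd p n = 1) (hne : Even n) :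
    ∏ k ∈ Finset.Icc 1 (β * n - 1),
        ((d : ℂ) - Complex.exp (2 * Real.pi * Complex.I * p * k / (β * n))
          - ∑ m ∈ Finset.Icc 1 (d - 1),
              Complex.exp (2 * Real.pi * Complex.I * (γ m * n + p) * k / (β * n)))
      = (n : ℂ) * (d : ℂ) ^ (β * n - 1)
        * (1 - (if Even β then (1 : ℂ) else 0) * (-1) ^ p / (d : ℂ) ^ n
            * (1 + ∑ m ∈ Finset.Icc 1 (d - 1), (-1 : ℂ) ^ (γ m)) ^ n)
        * ∏ k ∈ Finset.Icc 1 ((β + 1) / 2 - 1),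
            (((1 : ℝ)
                - 2 * ‖1 - dirEig d β γ k / d‖ ^ n
                    * Real.cos (2 * Real.pi * p * k / β + n * eigPhase d β γ k)
                + ‖1 - dirEig d β γ k / d‖ ^ (2 * n) : ℝ) : ℂ) := by
  have hβC : (β : ℂ) ≠ 0 := Nat.cast_ne_zero.mpr (by omega)
  have hnC : (n : ℂ) ≠ 0 := Nat.cast_ne_zero.mpr (by omega)
  have hdC : (d : ℂ) ≠ 0 := Nat.cast_ne_zero.mpr (by omega)
  set F : ℕ → ℂ := fun k =>
      ((d : ℂ) - Complex.exp (2 * Real.pi * Complex.I * p * k / (β * n))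
        - ∑ m ∈ Finset.Icc 1 (d - 1),
            Complex.exp (2 * Real.pi * Complex.I * (γ m * n + p) * k / (β * n))) with hFdef
  set G : ℕ → ℂ := fun k =>
      1 + ∑ m ∈ Finset.Icc 1 (d - 1),
            Complex.exp (2 * Real.pi * Complex.I * (γ m) * k / β) with hGdef
  set ζ : ℂ := Complex.exp (2 * Real.pi * Complex.I * p / n) with hζdef
  have hζprim : IsPrimitiveRoot ζ n := by
    have := Complex.isPrimitiveRoot_exp_of_coprime p n (by omega) hpn
    rwa [show 2 * (Real.pi : ℂ) * Complex.I * ((p : ℂ) / n)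
        = 2 * Real.pi * Complex.I * p / n by ring] at this
  -- Step 1: block formula
  have step1 : ∀ j t : ℕ, F (j + β * t)
      = (d : ℂ) - Complex.exp (2 * Real.pi * Complex.I * p * j / (β * n)) * ζ ^ t * G j := by
    intro j t
    have e1 : Complex.exp (2 * Real.pi * Complex.I * p * ((j + β * t : ℕ) : ℂ) / (β * n))
        = Complex.exp (2 * Real.pi * Complex.I * p * j / (β * n)) * ζ ^ t := by
      rw [hζdef, ← Complex.exp_nat_mul, ← Complex.exp_add]
      congr 1
      push_cast
      field_simp
    have e2 : ∀ m : ℕ,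
        Complex.exp (2 * Real.pi * Complex.I * ((γ m : ℂ) * n + p) * ((j + β * t : ℕ) : ℂ)
            / (β * n))
        = Complex.exp (2 * Real.pi * Complex.I * p * j / (β * n)) * ζ ^ t
            * Complex.exp (2 * Real.pi * Complex.I * (γ m) * j / β) := by
      intro m
      rw [hζdef, ← Complex.exp_nat_mul, ← Complex.exp_add, ← Complex.exp_add]
      rw [show (2 * (Real.pi : ℂ) * Complex.I * ((γ m : ℂ) * n + p) * ((j + β * t : ℕ) : ℂ)
            / (β * n))
          = (2 * (Real.pi : ℂ) * Complex.I * p * j / (β * n)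
              + (t : ℂ) * (2 * Real.pi * Complex.I * p / n)
              + 2 * Real.pi * Complex.I * (γ m) * j / β)
            + 2 * Real.pi * Complex.I * ((γ m * t : ℕ) : ℂ) by push_cast; field_simp; ring]
      rw [Complex.exp_add, expNatTwoPi, mul_one]
    rw [hFdef, hGdef]
    simp only []
    rw [e1, Finset.sum_congr rfl fun m _ => e2 m, ← Finset.mul_sum]
    ring
  -- Step 2: decomposition of the product
  have step2 : ∏ k ∈ Finset.Icc 1 (β * n - 1), F k
      = (∏ t ∈ Finset.Icc 1 (n - 1), F (β * t))
        * ∏ j ∈ Finset.Icc 1 (β - 1), ∏ t ∈ Finset.range n, F (j + β * t) := by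
    have hmulc : β * n = n * β := Nat.mul_comm β n
    have hdis : Disjoint (({0} : Finset ℕ) ×ˢ Finset.Icc 1 (n - 1))
        (Finset.Icc 1 (β - 1) ×ˢ Finset.range n) := by
      simp only [Finset.disjoint_left, Finset.mem_product, Finset.mem_singleton, Finset.mem_Icc,
        Finset.mem_range, Prod.forall]
      rintro a b ⟨ha, hb⟩ ⟨ha2, hb2⟩
      omega
    have h1 : ∏ t ∈ Finset.Icc 1 (n - 1), F (β * t)
        = ∏ q ∈ ({0} : Finset ℕ) ×ˢ Finset.Icc 1 (n - 1), F (q.1 + β * q.2) := by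
      rw [Finset.prod_product]
      simp
    have h2 : ∏ j ∈ Finset.Icc 1 (β - 1), ∏ t ∈ Finset.range n, F (j + β * t)
        = ∏ q ∈ Finset.Icc 1 (β - 1) ×ˢ Finset.range n, F (q.1 + β * q.2) := by
      rw [Finset.prod_product]
    rw [h1, h2, ← Finset.prod_union hdis]
    apply Finset.prod_nbij' (fun k => (k % β, k / β)) (fun q => q.1 + β * q.2)
    · intro k hk
      simp only [Finset.mem_Icc] at hk
      have hdm := Nat.div_add_mod k β
      have hmlt : k % β < β := Nat.mod_lt _ (by omega)
      have hdlt : k / β < n := (Nat.div_lt_iff_lt_mul (by omega)).mpr (by omega)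
      simp only [Finset.mem_union, Finset.mem_product, Finset.mem_singleton, Finset.mem_Icc,
        Finset.mem_range]
      by_cases hm0 : k % β = 0
      · left
        refine ⟨hm0, ?_, by omega⟩
        rcases Nat.eq_zero_or_pos (k / β) with h0 | h0
        · rw [h0, hm0] at hdm
          omega
        · omega
      · right
        exact ⟨⟨by omega, by omega⟩, hdlt⟩
    · intro q hq
      simp only [Finset.mem_union, Finset.mem_product, Finset.mem_singleton, Finset.mem_Icc,
        Finset.mem_range] at hq
      simp only [Finset.mem_Icc]
      have hub : q.1 ≤ β - 1 ∧ q.2 ≤ n - 1 := by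
        rcases hq with ⟨h1, h2a, h2b⟩ | ⟨⟨h1a, h1b⟩, h2⟩ <;> exact ⟨by omega, by omega⟩
      have hupper := natProdBound (show 1 ≤ β by omega) hn hub.1 hub.2
      refine ⟨?_, hupper⟩
      rcases hq with ⟨h1, h2a, h2b⟩ | ⟨⟨h1a, h1b⟩, h2⟩
      · have h4 : 1 * 1 ≤ β * q.2 :=
          Nat.mul_le_mul (show 1 ≤ β by omega) (show 1 ≤ q.2 by omega)
        omega
      · omega
    · intro k _
      exact Nat.mod_add_div k β
    · intro q hq
      simp only [Finset.mem_union, Finset.mem_product, Finset.mem_singleton, Finset.mem_Icc,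
        Finset.mem_range] at hq
      have hq1 : q.1 < β := by rcases hq with ⟨h, _⟩ | ⟨⟨_, h⟩, _⟩ <;> omega
      have hmod : (q.1 + β * q.2) % β = q.1 := by
        rw [Nat.add_mul_mod_self_left, Nat.mod_eq_of_lt hq1]
      have hdiv : (q.1 + β * q.2) / β = q.2 := by
        rw [Nat.add_mul_div_left _ _ (show 0 < β by omega), Nat.div_eq_of_lt hq1, Nat.zero_add]
      rw [hmod, hdiv]
    · intro k _
      rw [Nat.mod_add_div k β]
  -- Step 3: j = 0 block
  have step3 : ∏ t ∈ Finset.Icc 1 (n - 1), F (β * t) = (d : ℂ) ^ (n - 1) * n := by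
    have hG0 : G 0 = (d : ℂ) := by
      rw [hGdef]
      simp only [Nat.cast_zero, mul_zero, zero_div, Complex.exp_zero, Finset.sum_const,
        Nat.card_Icc, nsmul_eq_mul, mul_one]
      rw [show d - 1 + 1 - 1 = d - 1 by omega]
      push_cast [Nat.cast_sub (show 1 ≤ d by omega)]
      ring
    have hb : ∀ t : ℕ, F (β * t) = (d : ℂ) * (1 - ζ ^ t) := by
      intro t
      have h := step1 0 t
      rw [Nat.zero_add] at h
      rw [h, hG0]
      simp only [Nat.cast_zero, mul_zero, zero_div, Complex.exp_zero]
      ring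
    rw [Finset.prod_congr rfl fun t _ => hb t, Finset.prod_mul_distrib, Finset.prod_const,
      Nat.card_Icc, prodOneSub hn hζprim, show n - 1 + 1 - 1 = n - 1 by omega]
  -- h-function
  set hfun : ℕ → ℂ := fun j =>
      1 - Complex.exp (2 * Real.pi * Complex.I * p * j / β) * (G j / d) ^ n with hhdef
  -- Step 4: general blocks
  have step4 : ∀ j, ∏ t ∈ Finset.range n, F (j + β * t) = (d : ℂ) ^ n * hfun j := by
    intro j
    have hb : ∀ t : ℕ, F (j + β * t)
        = (d : ℂ) - ζ ^ t * (Complex.exp (2 * Real.pi * Complex.I * p * j / (β * n)) * G j) :=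
      fun t => by rw [step1 j t]; ring
    rw [Finset.prod_congr rfl fun t _ => hb t, prodRoots (show 0 < n by omega) hζprim]
    have hEn : Complex.exp (2 * Real.pi * Complex.I * p * j / (β * n)) ^ n
        = Complex.exp (2 * Real.pi * Complex.I * p * j / β) := by
      rw [← Complex.exp_nat_mul]
      congr 1
      field_simp
    rw [mul_pow, hEn, hhdef]
    simp only []
    rw [div_pow]
    field_simp
  -- Step 5: mid term and pairing
  have step5 : ∏ j ∈ Finset.Icc 1 (β - 1), hfun j
      = (if Even β then hfun (β / 2) else 1)
        * ∏ j ∈ Finset.Icc 1 ((β + 1) / 2 - 1), (hfun j * hfun (β - j)) := by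
    have hrefl : ∀ a b : ℕ, 1 ≤ a → b ≤ β - 1 → a + b = β →
        ∏ j ∈ Finset.Ioc (b : ℕ) (β - 1), hfun j
          = ∏ j ∈ Finset.Icc 1 (a - 1), hfun (β - j) := by
      intro a b hab hbβ habβ
      apply Finset.prod_nbij' (fun k => β - k) (fun k => β - k)
      · intro k hk
        simp only [Finset.mem_Ioc] at hk
        simp only [Finset.mem_Icc]
        omega
      · intro k hk
        simp only [Finset.mem_Icc] at hk
        simp only [Finset.mem_Ioc]
        omega
      · intro k hk
        simp only [Finset.mem_Ioc] at hk
        omega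
      · intro k hk
        simp only [Finset.mem_Icc] at hk
        omega
      · intro k hk
        simp only [Finset.mem_Ioc] at hk
        rw [show β - (β - k) = k by omega]
    by_cases hEv : Even β
    · rw [if_pos hEv]
      obtain ⟨c, hc⟩ := hEv
      have hc1 : 1 ≤ c := by omega
      rw [show β / 2 = c by omega, show (β + 1) / 2 - 1 = c - 1 by omega]
      rw [show Finset.Icc 1 (β - 1) = Finset.Ioc 0 (β - 1) from Finset.Icc_add_one_left_eq_Ioc 0 (β - 1)]
      rw [← Finset.prod_Ioc_consecutive hfun (show 0 ≤ c - 1 by omega)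
          (show c - 1 ≤ β - 1 by omega),
        ← Finset.prod_Ioc_consecutive hfun (show c - 1 ≤ c by omega)
          (show c ≤ β - 1 by omega)]
      have hmid : Finset.Ioc (c - 1) c = {c} := by
        rw [← Finset.Icc_add_one_left_eq_Ioc, show c - 1 + 1 = c by omega, Finset.Icc_self]
      rw [hmid, Finset.prod_singleton, hrefl c c (by omega) (by omega) (by omega),
        show Finset.Ioc (0 : ℕ) (c - 1) = Finset.Icc 1 (c - 1) from
          (Finset.Icc_add_one_left_eq_Ioc 0 (c - 1)).symm,
        Finset.prod_mul_distrib]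
      ring
    · rw [if_neg hEv, one_mul]
      have hodd : β % 2 = 1 := Nat.not_even_iff.mp hEv
      obtain ⟨c, hc⟩ : ∃ c, β = 2 * c + 1 := ⟨β / 2, by omega⟩
      rw [show (β + 1) / 2 - 1 = c by omega]
      rw [show Finset.Icc 1 (β - 1) = Finset.Ioc 0 (β - 1) from Finset.Icc_add_one_left_eq_Ioc 0 (β - 1)]
      rw [← Finset.prod_Ioc_consecutive hfun (show 0 ≤ c by omega) (show c ≤ β - 1 by omega)]
      rw [hrefl (c + 1) c (by omega) (by omega) (by omega),
        show c + 1 - 1 = c by omega,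
        show Finset.Ioc (0 : ℕ) c = Finset.Icc 1 c from (Finset.Icc_add_one_left_eq_Ioc 0 c).symm,
        Finset.prod_mul_distrib]
  -- Step 6: mid term value
  have step6 : (if Even β then hfun (β / 2) else 1)
      = (1 - (if Even β then (1 : ℂ) else 0) * (-1) ^ p / (d : ℂ) ^ n
            * (1 + ∑ m ∈ Finset.Icc 1 (d - 1), (-1 : ℂ) ^ (γ m)) ^ n) := by
    by_cases hEv : Even β
    · rw [if_pos hEv, if_pos hEv]
      obtain ⟨c, hc⟩ := hEv
      have hc1 : 1 ≤ c := by omega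
      have hcC : (c : ℂ) ≠ 0 := Nat.cast_ne_zero.mpr (by omega)
      have hβc : (β : ℂ) = (c : ℂ) + c := by exact_mod_cast congrArg (Nat.cast (R := ℂ)) hc
      have hβ2 : β / 2 = c := by omega
      have hkey : ∀ a : ℕ, Complex.exp (2 * Real.pi * Complex.I * a * ((β / 2 : ℕ) : ℂ) / β)
          = (-1 : ℂ) ^ a := by
        intro a
        rw [hβ2, show 2 * (Real.pi : ℂ) * Complex.I * a * c / β = a * (Real.pi * Complex.I) by
          rw [hβc, show (c : ℂ) + c = 2 * c by ring, mul_comm (2 : ℂ) (c : ℂ),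
            ← div_div, mul_div_assoc, mul_div_assoc, div_self hcC]
          ring]
        rw [Complex.exp_nat_mul, Complex.exp_pi_mul_I]
      have hGc : G (β / 2) = 1 + ∑ m ∈ Finset.Icc 1 (d - 1), (-1 : ℂ) ^ (γ m) := by
        simp only [hGdef]
        congr 1
        exact Finset.sum_congr rfl fun m _ => hkey (γ m)
      simp only [hhdef]
      rw [hkey p, hGc, div_pow]
      ring
    · rw [if_neg hEv, if_neg hEv]
      ring
  -- Step 7: paired factors are the real factors
  have step7 : ∀ j ∈ Finset.Icc 1 ((β + 1) / 2 - 1), hfun j * hfun (β - j)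
      = (((1 : ℝ)
                - 2 * ‖1 - dirEig d β γ j / d‖ ^ n
                    * Real.cos (2 * Real.pi * p * j / β + n * eigPhase d β γ j)
                + ‖1 - dirEig d β γ j / d‖ ^ (2 * n) : ℝ) : ℂ) := by
    intro j hj
    simp only [Finset.mem_Icc] at hj
    have hjβ : j ≤ β := by omega
    -- conjugation symmetry
    have key : ∀ a : ℕ, Complex.exp (2 * Real.pi * Complex.I * a * ((β - j : ℕ) : ℂ) / β)
        = (starRingEnd ℂ) (Complex.exp (2 * Real.pi * Complex.I * a * j / β)) := by
      intro a
      rw [← Complex.exp_conj]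
      have harg : (starRingEnd ℂ) (2 * Real.pi * Complex.I * a * j / β)
          = -(2 * Real.pi * Complex.I * (a : ℂ) * j / β) := by
        simp only [map_div₀, map_mul, map_ofNat, Complex.conj_I, Complex.conj_ofReal,
          Complex.conj_natCast]
        ring
      rw [harg, show (2 * (Real.pi : ℂ) * Complex.I * a * ((β - j : ℕ) : ℂ) / β)
          = -(2 * Real.pi * Complex.I * (a : ℂ) * j / β) + 2 * Real.pi * Complex.I * (a : ℂ) by
        rw [Nat.cast_sub hjβ]; field_simp; ring]
      rw [Complex.exp_add, show 2 * (Real.pi : ℂ) * Complex.I * (a : ℂ)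
          = 2 * Real.pi * Complex.I * ((a : ℕ) : ℂ) by norm_num, expNatTwoPi, mul_one]
    have hGconj : G (β - j) = (starRingEnd ℂ) (G j) := by
      simp only [hGdef]
      rw [map_add, map_one, map_sum]
      congr 1
      exact Finset.sum_congr rfl fun m _ => key (γ m)
    have hconj : hfun (β - j) = (starRingEnd ℂ) (hfun j) := by
      simp only [hhdef]
      rw [map_sub, map_one, map_mul, map_pow, map_div₀, Complex.conj_natCast, hGconj, key p]
    -- real decomposition
    set x : ℝ := 1 + ∑ m ∈ Finset.Icc 1 (d - 1), Real.cos (2 * Real.pi * (γ m) * j / β)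
      with hxdef
    set y : ℝ := ∑ m ∈ Finset.Icc 1 (d - 1), Real.sin (2 * Real.pi * (γ m) * j / β) with hydef
    have hGxy : G j = (x : ℂ) + (y : ℂ) * Complex.I := by
      simp only [hGdef, hxdef, hydef]
      have hterm : ∀ m ∈ Finset.Icc 1 (d - 1),
          Complex.exp (2 * Real.pi * Complex.I * (γ m) * j / β)
          = ((Real.cos (2 * Real.pi * (γ m) * j / β) : ℝ) : ℂ)
            + ((Real.sin (2 * Real.pi * (γ m) * j / β) : ℝ) : ℂ) * Complex.I := by
        intro m _
        rw [show (2 * (Real.pi : ℂ) * Complex.I * (γ m) * j / β)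
            = ((2 * Real.pi * (γ m) * j / β : ℝ) : ℂ) * Complex.I by push_cast; ring]
        rw [Complex.exp_mul_I, ← Complex.ofReal_cos, ← Complex.ofReal_sin]
      rw [Finset.sum_congr rfl hterm, Finset.sum_add_distrib, ← Finset.sum_mul]
      push_cast
      ring
    have hdir : dirEig d β γ j = (d : ℂ) - G j := by
      simp only [dirEig, hGdef]
      ring
    have hGd : G j / (d : ℂ) = 1 - dirEig d β γ j / d := by
      rw [hdir]
      field_simp
      ring
    have hz : (1 : ℂ) - dirEig d β γ j / d = ((x / d : ℝ) : ℂ) + ((y / d : ℝ) : ℂ) * Complex.I := by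
      rw [← hGd, hGxy]
      push_cast
      ring
    set r : ℝ := Real.sqrt ((x / d) ^ 2 + (y / d) ^ 2) with hrdef
    have hr : ‖1 - dirEig d β γ j / d‖ = r := by
      rw [hz, Complex.norm_def, Complex.normSq_add_mul_I, hrdef]
    have hdR : (0 : ℝ) < d := by exact_mod_cast (show 0 < d by omega)
    have hxu : (d : ℝ) - undirEig d β γ j / 2 = x := by
      simp only [undirEig, hxdef]
      ring
    have hsign : Real.sign (y / (d : ℝ)) = Real.sign y := by
      rcases lt_trichotomy y 0 with h | h | h
      · rw [Real.sign_of_neg h, Real.sign_of_neg (div_neg_of_neg_of_pos h hdR)]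
      · rw [h, zero_div]
      · rw [Real.sign_of_pos h, Real.sign_of_pos (div_pos h hdR)]
    have hphase : (if x / (d : ℝ) = 0 then Real.sign (y / (d : ℝ)) * Real.pi / 2
        else Real.arctan ((y / (d : ℝ)) / (x / (d : ℝ)))) = eigPhase d β γ j := by
      simp only [eigPhase]
      rw [hxu, ← hydef]
      by_cases hxx : x = 0
      · rw [if_pos (show x / (d : ℝ) = 0 by rw [hxx, zero_div]), if_pos hxx, hsign]
      · rw [if_neg (show x / (d : ℝ) ≠ 0 from div_ne_zero hxx hdR.ne'), if_neg hxx]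
        congr 1
        field_simp
    set ψ : ℝ := eigPhase d β γ j with hψdef
    have hpolar : (G j / (d : ℂ)) ^ n
        = ((r ^ n : ℝ) : ℂ) * Complex.exp ((((n : ℝ) * ψ : ℝ) : ℂ) * Complex.I) := by
      rw [hGd, hz, phasePow (x / d) (y / d) hne, hphase, ← hrdef]
      push_cast
      ring_nf
    have hmain : hfun j = 1 - ((r ^ n : ℝ) : ℂ)
        * Complex.exp (((2 * Real.pi * p * j / β + n * ψ : ℝ) : ℂ) * Complex.I) := by
      simp only [hhdef]
      rw [hpolar, show Complex.exp (2 * Real.pi * Complex.I * p * j / β)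
          = Complex.exp (((2 * Real.pi * p * j / β : ℝ) : ℂ) * Complex.I) by
        congr 1; push_cast; ring]
      rw [show ((2 * Real.pi * p * j / β + n * ψ : ℝ) : ℂ) * Complex.I
          = ((2 * Real.pi * p * j / β : ℝ) : ℂ) * Complex.I
            + (((n : ℝ) * ψ : ℝ) : ℂ) * Complex.I by push_cast; ring]
      rw [Complex.exp_add]
      ring
    set α : ℝ := 2 * Real.pi * p * j / β + n * ψ with hαdef
    rw [hconj, hmain, hr]
    have hc2 : (starRingEnd ℂ) (1 - ((r ^ n : ℝ) : ℂ) * Complex.exp ((α : ℂ) * Complex.I))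
        = 1 - ((r ^ n : ℝ) : ℂ) * Complex.exp (-((α : ℂ) * Complex.I)) := by
      rw [map_sub, map_one, map_mul, ← Complex.exp_conj, Complex.conj_ofReal]
      congr 2
      simp only [map_mul, Complex.conj_I, Complex.conj_ofReal]
      ring
    rw [hc2]
    have hexpsum : Complex.exp ((α : ℂ) * Complex.I) + Complex.exp (-((α : ℂ) * Complex.I))
        = 2 * ((Real.cos α : ℝ) : ℂ) := by
      rw [show -((α : ℂ) * Complex.I) = (-(α : ℂ)) * Complex.I by ring, Complex.exp_mul_I,
        Complex.exp_mul_I, Complex.cos_neg, Complex.sin_neg, Complex.ofReal_cos]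
      ring
    have hexpprod : Complex.exp ((α : ℂ) * Complex.I) * Complex.exp (-((α : ℂ) * Complex.I))
        = 1 := by
      rw [← Complex.exp_add, add_neg_cancel, Complex.exp_zero]
    calc (1 - ((r ^ n : ℝ) : ℂ) * Complex.exp ((α : ℂ) * Complex.I))
          * (1 - ((r ^ n : ℝ) : ℂ) * Complex.exp (-((α : ℂ) * Complex.I)))
        = 1 - ((r ^ n : ℝ) : ℂ)
              * (Complex.exp ((α : ℂ) * Complex.I) + Complex.exp (-((α : ℂ) * Complex.I)))
            + ((r ^ n : ℝ) : ℂ) ^ 2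
              * (Complex.exp ((α : ℂ) * Complex.I) * Complex.exp (-((α : ℂ) * Complex.I))) := by
          ring
      _ = 1 - ((r ^ n : ℝ) : ℂ) * (2 * ((Real.cos α : ℝ) : ℂ)) + ((r ^ n : ℝ) : ℂ) ^ 2 := by
          rw [hexpsum, hexpprod, mul_one]
      _ = (((1 : ℝ) - 2 * r ^ n * Real.cos α + r ^ (2 * n) : ℝ) : ℂ) := by
          rw [show 2 * n = n * 2 from mul_comm 2 n, pow_mul]
          push_cast
          ring
  -- Assemble
  rw [step2, step3]
  rw [Finset.prod_congr rfl fun j _ => step4 j, Finset.prod_mul_distrib, Finset.prod_const,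
    Nat.card_Icc]
  rw [step5, step6, Finset.prod_congr rfl step7]
  have hpow : (d : ℂ) ^ (n - 1) * ((d : ℂ) ^ n) ^ (β - 1 + 1 - 1) = (d : ℂ) ^ (β * n - 1) := by
    rw [← pow_mul, ← pow_add]
    congr 1
    have h1 : n * (β - 1 + 1 - 1) = n * β - n := by
      have hb : β - 1 + 1 - 1 = β - 1 := by omega
      rw [hb, Nat.mul_sub, Nat.mul_one]
    have h2 : n ≤ n * β := Nat.le_mul_of_pos_right _ (by omega)
    rw [h1, mul_comm β n]
    revert h2; generalize n * β = a; intro h2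
    omega
  rw [← hpow]
  ring
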